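/- Let φ : [0,∞) → [0,∞) be an N-function of class C¹([0,∞)) ∩ C²((0,∞)) with φ(0) = 0, φ'(0) = 0, φ' increasing and positive on (0,∞), satisfying p ≤ s·φ''(s)/φ'(s) + 1 ≤ q for all s > 0, where 1 < p ≤ q. Then there exists c = c(p,q) ≥ 1 such that for all P, Q ∈ ℝ^{N×n}: c⁻¹ · ∫₀¹ φ'(1+|τP+(1−τ)Q|)/(1+|τP+(1−τ)Q|) dτ ≤ φ'(1+|P|+|Q|)/(1+|P|+|Q|) ≤ c · ∫₀¹ φ'(1+|τP+(1−τ)Q|)/(1+|τP+(1−τ)Q|) dτ. -/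

import Mathlib

open MeasureTheory Real Set Filter
open scoped InnerProductSpace

/-- An N-function `φ` of class `C¹([0,∞)) ∩ C²((0,∞))` with (right) derivative `φ'`
and second derivative `φ''` on `(0,∞)`, satisfying `φ(0) = 0`, `φ'(0) = 0`, `φ'`
increasing and positive on `(0,∞)`, and the index condition
`p ≤ s·φ''(s)/φ'(s) + 1 ≤ q` for all `s > 0`. -/
structure IsNFun (φ φ' φ'' : ℝ → ℝ) (p q : ℝ) : Prop where
  map_zero : φ 0 = 0
  nonneg : ∀ s : ℝ, 0 ≤ s → 0 ≤ φ s
  hasDeriv : ∀ s ∈ Set.Ici (0:ℝ), HasDerivWithinAt φ (φ' s) (Set.Ici 0) s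
  derivCont : ContinuousOn φ' (Set.Ici 0)
  hasDeriv2 : ∀ s ∈ Set.Ioi (0:ℝ), HasDerivWithinAt φ' (φ'' s) (Set.Ioi 0) s
  deriv2Cont : ContinuousOn φ'' (Set.Ioi 0)
  deriv_zero : φ' 0 = 0
  deriv_mono : MonotoneOn φ' (Set.Ici 0)
  deriv_pos : ∀ s : ℝ, 0 < s → 0 < φ' s
  idx_low : ∀ s : ℝ, 0 < s → p ≤ s * φ'' s / φ' s + 1
  idx_high : ∀ s : ℝ, 0 < s → s * φ'' s / φ' s + 1 ≤ q

/-- The shifted N-function `φ_σ(s) = ∫₀^s φ'(σ+t)·t/(σ+t) dt`, expressed through the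
derivative `φ'` of `φ`. -/
noncomputable def shifted (φ' : ℝ → ℝ) (σ s : ℝ) : ℝ :=
  ∫ t in (0:ℝ)..s, φ' (σ + t) * t / (σ + t)

section Aux

open scoped RealInnerProductSpace

variable {φ φ' φ'' : ℝ → ℝ} {p q : ℝ}

lemma IsNFun.deriv_nonneg' (h : IsNFun φ φ' φ'' p q) {s : ℝ} (hs : 0 ≤ s) : 0 ≤ φ' s := by
  rcases eq_or_lt_of_le hs with rfl | hs
  · exact le_of_eq h.deriv_zero.symm
  · exact (h.deriv_pos s hs).le

lemma IsNFun.hasDerivAt2 (h : IsNFun φ φ' φ'' p q) {s : ℝ} (hs : 0 < s) :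
    HasDerivAt φ' (φ'' s) s :=
  (h.hasDeriv2 s hs).hasDerivAt (Ioi_mem_nhds hs)

lemma IsNFun.hasDerivAt_aux (h : IsNFun φ φ' φ'' p q) (r : ℝ) {u : ℝ} (hu : 0 < u) :
    HasDerivAt (fun v => φ' v * v ^ (1 - r)) (u ^ (-r) * (u * φ'' u - (r - 1) * φ' u)) u := by
  have h1 := h.hasDerivAt2 hu
  have h2 : HasDerivAt (fun v : ℝ => v ^ (1 - r)) ((1 - r) * u ^ (1 - r - 1)) u :=
    Real.hasDerivAt_rpow_const (Or.inl hu.ne')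
  have h3 := h1.mul h2
  refine h3.congr_deriv ?_
  have e1 : u ^ (1 - r) = u * u ^ (-r) := by
    rw [show (1 : ℝ) - r = 1 + -r by ring, Real.rpow_add hu, Real.rpow_one]
  have e2 : (1:ℝ) - r - 1 = -r := by ring
  rw [e1, e2]; ring

lemma IsNFun.ratio_p (h : IsNFun φ φ' φ'' p q) {a b : ℝ}
    (ha : 0 < a) (hab : a ≤ b) :
    φ' a * a ^ (1 - p) ≤ φ' b * b ^ (1 - p) := by
  have hmono : MonotoneOn (fun v => φ' v * v ^ (1 - p)) (Icc a b) := by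
    apply monotoneOn_of_deriv_nonneg (convex_Icc a b)
    · intro x hx
      exact ((h.hasDerivAt_aux p (lt_of_lt_of_le ha hx.1)).continuousAt).continuousWithinAt
    · intro x hx
      rw [interior_Icc] at hx
      exact ((h.hasDerivAt_aux p (ha.trans hx.1)).differentiableAt).differentiableWithinAt
    · intro x hx
      rw [interior_Icc] at hx
      have hx0 : 0 < x := ha.trans hx.1
      rw [(h.hasDerivAt_aux p hx0).deriv]
      have hφ := h.deriv_pos x hx0
      have hidx := h.idx_low x hx0
      have h2 : (p - 1) * φ' x ≤ x * φ'' x := by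
        have : p - 1 ≤ x * φ'' x / φ' x := by linarith
        exact (le_div_iff₀ hφ).mp this
      exact mul_nonneg (Real.rpow_nonneg hx0.le _) (by linarith)
  exact hmono (left_mem_Icc.mpr hab) (right_mem_Icc.mpr hab) hab

lemma IsNFun.ratio_q (h : IsNFun φ φ' φ'' p q) {a b : ℝ}
    (ha : 0 < a) (hab : a ≤ b) :
    φ' b * b ^ (1 - q) ≤ φ' a * a ^ (1 - q) := by
  have hmono : AntitoneOn (fun v => φ' v * v ^ (1 - q)) (Icc a b) := by
    apply antitoneOn_of_deriv_nonpos (convex_Icc a b)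
    · intro x hx
      exact ((h.hasDerivAt_aux q (lt_of_lt_of_le ha hx.1)).continuousAt).continuousWithinAt
    · intro x hx
      rw [interior_Icc] at hx
      exact ((h.hasDerivAt_aux q (ha.trans hx.1)).differentiableAt).differentiableWithinAt
    · intro x hx
      rw [interior_Icc] at hx
      have hx0 : 0 < x := ha.trans hx.1
      rw [(h.hasDerivAt_aux q hx0).deriv]
      have hφ := h.deriv_pos x hx0
      have hidx := h.idx_high x hx0
      have h2 : x * φ'' x ≤ (q - 1) * φ' x := by
        have : x * φ'' x / φ' x ≤ q - 1 := by linarith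
        exact (div_le_iff₀ hφ).mp this
      exact mul_nonpos_of_nonneg_of_nonpos (Real.rpow_nonneg hx0.le _) (by linarith)
  exact hmono (left_mem_Icc.mpr hab) (right_mem_Icc.mpr hab) hab

/-- Comparison in the "upper" direction: if the arguments are comparable within a factor 4. -/
lemma IsNFun.g_upper (h : IsNFun φ φ' φ'' p q) (h1q : 1 ≤ q) {t s : ℝ}
    (ht : 0 ≤ t) (hts : t ≤ s) (h4 : 1 + s ≤ 4 * (1 + t)) :
    φ' (1 + s) / (1 + s) ≤ 4 ^ (q - 1) * (φ' (1 + t) / (1 + t)) := by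
  set a := 1 + t with hadef
  set b := 1 + s with hbdef
  have ha : (0:ℝ) < a := by simp only [hadef]; linarith
  have hb : (0:ℝ) < b := by simp only [hbdef]; linarith
  have hab : a ≤ b := by simp only [hadef, hbdef]; linarith
  have hra : φ' b * b ^ (1 - q) ≤ φ' a * a ^ (1 - q) := h.ratio_q ha hab
  have hnn : 0 ≤ φ' a := h.deriv_nonneg' ha.le
  have h2 : φ' b ≤ φ' a * 4 ^ (q - 1) := by
    have hb1 : φ' b = φ' b * b ^ (1 - q) * b ^ (q - 1) := by
      rw [mul_assoc, ← Real.rpow_add hb]; norm_num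
    have step : φ' b * b ^ (1-q) * b ^ (q-1) ≤ φ' a * a ^ (1-q) * b ^ (q-1) :=
      mul_le_mul_of_nonneg_right hra (Real.rpow_nonneg hb.le _)
    have key : a ^ (1-q) * b ^ (q-1) ≤ 4 ^ (q-1) := by
      have e1 : a ^ (1-q) * b ^ (q-1) = (b / a) ^ (q-1) := by
        rw [Real.div_rpow hb.le ha.le, div_eq_mul_inv, ← Real.rpow_neg ha.le]
        rw [show -(q-1) = 1 - q by ring]; ring
      rw [e1]
      exact Real.rpow_le_rpow (div_nonneg hb.le ha.le)
        ((div_le_iff₀ ha).mpr (by linarith)) (by linarith)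
    calc φ' b = φ' b * b ^ (1 - q) * b ^ (q - 1) := hb1
      _ ≤ φ' a * a ^ (1-q) * b ^ (q-1) := step
      _ = φ' a * (a ^ (1-q) * b ^ (q-1)) := by ring
      _ ≤ φ' a * 4 ^ (q-1) := mul_le_mul_of_nonneg_left key hnn
  have hnum : (0:ℝ) ≤ φ' a * 4 ^ (q-1) := by positivity
  calc φ' b / b ≤ (φ' a * 4 ^ (q-1)) / b := by gcongr
    _ ≤ (φ' a * 4 ^ (q-1)) / a := by gcongr
    _ = 4 ^ (q-1) * (φ' a / a) := by ring

/-- Comparison in the "lower" direction, with ratio exponent `max (2-p) 0 < 1`. -/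
lemma IsNFun.g_lower (h : IsNFun φ φ' φ'' p q) {t s : ℝ}
    (ht : 0 ≤ t) (hts : t ≤ s) :
    φ' (1 + t) / (1 + t) ≤ ((1 + s) / (1 + t)) ^ (max (2-p) 0) * (φ' (1 + s) / (1 + s)) := by
  set α := max (2-p) 0 with hαdef
  set a := 1 + t with hadef
  set b := 1 + s with hbdef
  have ha : (0:ℝ) < a := by simp only [hadef]; linarith
  have hb : (0:ℝ) < b := by simp only [hbdef]; linarith
  have hab : a ≤ b := by simp only [hadef, hbdef]; linarith
  have hra : φ' a * a ^ (1 - p) ≤ φ' b * b ^ (1 - p) := h.ratio_p ha hab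
  have hnns : 0 ≤ φ' b := h.deriv_nonneg' hb.le
  have e0 : φ' a / a = φ' a * a ^ (1-p) * a ^ (p - 2) := by
    rw [mul_assoc, ← Real.rpow_add ha, show (1-p) + (p-2) = (-1 : ℝ) by ring,
      Real.rpow_neg_one]
    ring
  have step : φ' a * a ^ (1-p) * a ^ (p-2) ≤ φ' b * b ^ (1-p) * a ^ (p-2) :=
    mul_le_mul_of_nonneg_right hra (Real.rpow_nonneg ha.le _)
  have e1 : φ' b * b ^ (1-p) * a ^ (p-2) = (φ' b / b) * ((b/a) ^ (2-p)) := by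
    rw [Real.div_rpow hb.le ha.le, show (1:ℝ)-p = (2-p) + (-1) by ring,
      Real.rpow_add hb, Real.rpow_neg_one, show (p:ℝ)-2 = -(2-p) by ring,
      Real.rpow_neg ha.le]
    ring
  have e2 : (b/a) ^ (2-p) ≤ (b/a) ^ α :=
    Real.rpow_le_rpow_of_exponent_le ((one_le_div ha).mpr hab) (le_max_left _ _)
  calc φ' a / a = φ' a * a ^ (1-p) * a ^ (p - 2) := e0
    _ ≤ φ' b * b ^ (1-p) * a ^ (p-2) := step
    _ = (φ' b / b) * ((b/a) ^ (2-p)) := e1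
    _ ≤ (φ' b / b) * ((b/a) ^ α) :=
        mul_le_mul_of_nonneg_left e2 (div_nonneg hnns hb.le)
    _ = (b/a) ^ α * (φ' b / b) := by ring

/-- Lower comparison with a plain constant. -/
lemma IsNFun.g_lower' (h : IsNFun φ φ' φ'' p q) (hp : 1 < p) {t s R : ℝ}
    (ht : 0 ≤ t) (hts : t ≤ s) (hR : 1 ≤ R) (hRs : 1 + s ≤ R * (1 + t)) :
    φ' (1 + t) / (1 + t) ≤ R * (φ' (1 + s) / (1 + s)) := by
  have hα1 : max (2-p) 0 ≤ 1 := by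
    apply max_le (by linarith) zero_le_one
  have key := h.g_lower ht hts
  have hb : (0:ℝ) < 1 + s := by linarith
  have ha : (0:ℝ) < 1 + t := by linarith
  have hratio : (1 + s) / (1 + t) ≤ R := (div_le_iff₀ ha).mpr (by linarith)
  have hrw : ((1 + s) / (1 + t)) ^ (max (2-p) 0) ≤ R := by
    calc ((1 + s) / (1 + t)) ^ (max (2-p) 0) ≤ R ^ (max (2-p) 0) :=
          Real.rpow_le_rpow (by positivity) hratio (le_max_right _ _)
      _ ≤ R ^ (1:ℝ) := Real.rpow_le_rpow_of_exponent_le hR hα1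
      _ = R := Real.rpow_one R
  refine key.trans ?_
  apply mul_le_mul_of_nonneg_right hrw
  exact div_nonneg (h.deriv_nonneg' hb.le) hb.le

/-- Interval integrability of `|τ - c| ^ (-α)` for `α < 1`. -/
lemma intervalIntegrable_abs_rpow {α : ℝ} (hα1 : α < 1) (c a b : ℝ) :
    IntervalIntegrable (fun τ => |τ - c| ^ (-α)) volume a b := by
  have habs : ∀ x y : ℝ, IntervalIntegrable (fun u => |u| ^ (-α)) volume x y := by
    have h0 : ∀ y : ℝ, 0 ≤ y → IntervalIntegrable (fun u => |u| ^ (-α)) volume 0 y := by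
      intro y hy
      apply (intervalIntegral.intervalIntegrable_rpow' (by linarith : (-1:ℝ) < -α)).congr
      have : Set.uIoc (0:ℝ) y = Ioc 0 y := uIoc_of_le hy
      rw [this]
      intro u hu
      show u ^ (-α) = |u| ^ (-α)
      rw [abs_of_nonneg hu.1.le]
    have hgen : ∀ y : ℝ, IntervalIntegrable (fun u => |u| ^ (-α)) volume 0 y := by
      intro y
      rcases le_or_gt 0 y with hy | hy
      · exact h0 y hy
      · have h1 := (h0 (-y) (by linarith)).comp_mul_left (c := -1)
        have h2 : (fun u : ℝ => |(-1 : ℝ) * u| ^ (-α)) = fun u : ℝ => |u| ^ (-α) := by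
          funext u; rw [neg_one_mul, abs_neg]
        rw [h2] at h1
        simpa using h1
    intro x y
    exact (hgen x).symm.trans (hgen y)
  have := (habs (a - c) (b - c)).comp_sub_right c
  simpa using this

/-- The key singular-integral bound: `∫₀¹ |τ-c|^{-α} dτ ≤ 2/(1-α)`. -/
lemma integral_abs_rpow_le {α : ℝ} (hα1 : α < 1) (hα0 : 0 ≤ α) (c : ℝ) :
    (∫ τ in (0:ℝ)..1, |τ - c| ^ (-α)) ≤ 2 / (1 - α) := by
  have h1α : (0:ℝ) < 1 - α := by linarith
  have hbase : ∀ y : ℝ, ∫ u in (0:ℝ)..y, u ^ (-α) = y ^ (1 - α) / (1 - α) := by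
    intro y
    rw [integral_rpow (Or.inl (by linarith))]
    rw [Real.zero_rpow (by intro hc; linarith [hc])]
    ring_nf
  have hsub : ∀ x : ℝ, 0 ≤ x → (x + 1) ^ (1-α) ≤ x ^ (1-α) + 1 := by
    intro x hx
    have h := NNReal.rpow_add_le_add_rpow x.toNNReal 1 h1α.le (by linarith)
    have h2 := NNReal.coe_le_coe.2 h
    push_cast at h2
    rwa [Real.coe_toNNReal x hx, Real.one_rpow] at h2
  rcases le_or_gt c 0 with hc | hc
  · have hcongr : EqOn (fun τ : ℝ => |τ - c| ^ (-α)) (fun τ : ℝ => (τ - c) ^ (-α)) (uIcc 0 1) := by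
      intro τ hτ
      rw [uIcc_of_le zero_le_one] at hτ
      simp only
      rw [abs_of_nonneg (by linarith [hτ.1] : (0:ℝ) ≤ τ - c)]
    rw [intervalIntegral.integral_congr hcongr,
      intervalIntegral.integral_comp_sub_right (fun u => u ^ (-α)) c]
    rw [integral_rpow (Or.inl (by linarith))]
    have e : -α + 1 = 1 - α := by ring
    rw [e, zero_sub]
    have hx := hsub (-c) (by linarith)
    have e2 : (1 - c) = (-c) + 1 := by ring
    rw [e2]
    rw [div_le_div_iff₀ h1α h1α]
    have hnn : (0:ℝ) ≤ (-c) ^ (1-α) := Real.rpow_nonneg (by linarith) _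
    nlinarith [hx]
  rcases le_or_gt 1 c with hc1 | hc1
  · have hcongr : EqOn (fun τ : ℝ => |τ - c| ^ (-α)) (fun τ : ℝ => (c - τ) ^ (-α)) (uIcc 0 1) := by
      intro τ hτ
      rw [uIcc_of_le zero_le_one] at hτ
      simp only
      rw [abs_of_nonpos (by linarith [hτ.2] : τ - c ≤ 0), neg_sub]
    rw [intervalIntegral.integral_congr hcongr,
      intervalIntegral.integral_comp_sub_left (fun u => u ^ (-α)) c]
    rw [integral_rpow (Or.inl (by linarith))]
    have e : -α + 1 = 1 - α := by ring
    rw [e]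
    have hx := hsub (c - 1) (by linarith)
    rw [sub_zero]
    rw [div_le_div_iff₀ h1α h1α]
    have hnn : (0:ℝ) ≤ (c - 1) ^ (1-α) := Real.rpow_nonneg (by linarith) _
    have e3 : c ^ (1-α) = (c - 1 + 1) ^ (1-α) := by norm_num
    nlinarith [hx]
  · have i1 : IntervalIntegrable (fun τ => |τ - c| ^ (-α)) volume 0 c :=
      intervalIntegrable_abs_rpow hα1 c 0 c
    have i2 : IntervalIntegrable (fun τ => |τ - c| ^ (-α)) volume c 1 :=
      intervalIntegrable_abs_rpow hα1 c c 1
    rw [← intervalIntegral.integral_add_adjacent_intervals i1 i2]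
    have p1 : (∫ τ in (0:ℝ)..c, |τ - c| ^ (-α)) ≤ 1 / (1 - α) := by
      have hcongr : EqOn (fun τ : ℝ => |τ - c| ^ (-α)) (fun τ : ℝ => (c - τ) ^ (-α)) (uIcc 0 c) := by
        intro τ hτ
        rw [uIcc_of_le hc.le] at hτ
        simp only
        rw [abs_of_nonpos (by linarith [hτ.2] : τ - c ≤ 0), neg_sub]
      rw [intervalIntegral.integral_congr hcongr,
        intervalIntegral.integral_comp_sub_left (fun u => u ^ (-α)) c]
      rw [sub_self, sub_zero, hbase c]
      rw [div_le_div_iff₀ h1α h1α]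
      have hle1 : c ^ (1-α) ≤ 1 := Real.rpow_le_one hc.le hc1.le h1α.le
      nlinarith
    have p2 : (∫ τ in (c:ℝ)..1, |τ - c| ^ (-α)) ≤ 1 / (1 - α) := by
      have hcongr : EqOn (fun τ : ℝ => |τ - c| ^ (-α)) (fun τ : ℝ => (τ - c) ^ (-α)) (uIcc c 1) := by
        intro τ hτ
        rw [uIcc_of_le hc1.le] at hτ
        simp only
        rw [abs_of_nonneg (by linarith [hτ.1] : (0:ℝ) ≤ τ - c)]
      rw [intervalIntegral.integral_congr hcongr,
        intervalIntegral.integral_comp_sub_right (fun u => u ^ (-α)) c]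
      rw [sub_self, hbase (1 - c)]
      rw [div_le_div_iff₀ h1α h1α]
      have hle1 : (1 - c) ^ (1-α) ≤ 1 := Real.rpow_le_one (by linarith) (by linarith) h1α.le
      nlinarith
    have e : (2:ℝ) / (1 - α) = 1 / (1-α) + 1 / (1-α) := by ring
    rw [e]
    exact add_le_add p1 p2

variable {E : Type*} [NormedAddCommGroup E] [InnerProductSpace ℝ E]

lemma seg_norm_le (P Q : E) {τ : ℝ} (hτ0 : 0 ≤ τ) (hτ1 : τ ≤ 1) :
    ‖τ • P + (1 - τ) • Q‖ ≤ ‖P‖ + ‖Q‖ := by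
  calc ‖τ • P + (1 - τ) • Q‖ ≤ ‖τ • P‖ + ‖(1 - τ) • Q‖ := norm_add_le _ _
    _ = τ * ‖P‖ + (1 - τ) * ‖Q‖ := by
        rw [norm_smul, norm_smul, Real.norm_of_nonneg hτ0,
          Real.norm_of_nonneg (by linarith)]
    _ ≤ ‖P‖ + ‖Q‖ := by
        nlinarith [norm_nonneg P, norm_nonneg Q]

lemma seg_lower_A (P Q : E) {τ : ℝ} (hτ0 : 0 ≤ τ) (hτ1 : τ ≤ 1) :
    ‖P‖ + ‖Q‖ ≤ 2 * ‖τ • P + (1 - τ) • Q‖ + 2 * ‖P - Q‖ := by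
  set X := τ • P + (1 - τ) • Q with hX
  have e1 : P = X + (1 - τ) • (P - Q) := by rw [hX]; module
  have e2 : Q = X - τ • (P - Q) := by rw [hX]; module
  have h1 : ‖P‖ ≤ ‖X‖ + (1 - τ) * ‖P - Q‖ := by
    calc ‖P‖ = ‖X + (1 - τ) • (P - Q)‖ := by rw [← e1]
      _ ≤ ‖X‖ + ‖(1 - τ) • (P - Q)‖ := norm_add_le _ _
      _ = ‖X‖ + (1 - τ) * ‖P - Q‖ := by
          rw [norm_smul, Real.norm_of_nonneg (by linarith)]
  have h2 : ‖Q‖ ≤ ‖X‖ + τ * ‖P - Q‖ := by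
    calc ‖Q‖ = ‖X - τ • (P - Q)‖ := by rw [← e2]
      _ ≤ ‖X‖ + ‖τ • (P - Q)‖ := norm_sub_le _ _
      _ = ‖X‖ + τ * ‖P - Q‖ := by rw [norm_smul, Real.norm_of_nonneg hτ0]
  nlinarith [norm_nonneg (P - Q)]

lemma seg_good_right (P Q : E) {τ : ℝ} (hQP : ‖Q‖ ≤ ‖P‖) (hτ0 : 3/4 ≤ τ) (hτ1 : τ ≤ 1) :
    (‖P‖ + ‖Q‖) / 4 ≤ ‖τ • P + (1 - τ) • Q‖ := by
  set X := τ • P + (1 - τ) • Q with hX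
  have e1 : τ • P = X - (1 - τ) • Q := by rw [hX]; module
  have h1 : τ * ‖P‖ ≤ ‖X‖ + (1 - τ) * ‖Q‖ := by
    calc τ * ‖P‖ = ‖τ • P‖ := by rw [norm_smul, Real.norm_of_nonneg (by linarith)]
      _ = ‖X - (1 - τ) • Q‖ := by rw [← e1]
      _ ≤ ‖X‖ + ‖(1 - τ) • Q‖ := norm_sub_le _ _
      _ = ‖X‖ + (1 - τ) * ‖Q‖ := by rw [norm_smul, Real.norm_of_nonneg (by linarith)]
  nlinarith [norm_nonneg P, norm_nonneg Q]

lemma seg_good_left (P Q : E) {τ : ℝ} (hPQ : ‖P‖ ≤ ‖Q‖) (hτ0 : 0 ≤ τ) (hτ1 : τ ≤ 1/4) :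
    (‖P‖ + ‖Q‖) / 4 ≤ ‖τ • P + (1 - τ) • Q‖ := by
  set X := τ • P + (1 - τ) • Q with hX
  have e1 : (1 - τ) • Q = X - τ • P := by rw [hX]; module
  have h1 : (1 - τ) * ‖Q‖ ≤ ‖X‖ + τ * ‖P‖ := by
    calc (1 - τ) * ‖Q‖ = ‖(1 - τ) • Q‖ := by
          rw [norm_smul, Real.norm_of_nonneg (by linarith)]
      _ = ‖X - τ • P‖ := by rw [← e1]
      _ ≤ ‖X‖ + ‖τ • P‖ := norm_sub_le _ _
      _ = ‖X‖ + τ * ‖P‖ := by rw [norm_smul, Real.norm_of_nonneg hτ0]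
  nlinarith [norm_nonneg P, norm_nonneg Q]

lemma seg_proj (P Q : E) (hPQ : P ≠ Q) (τ : ℝ) :
    ‖P - Q‖ * |τ - (-(⟪Q, P - Q⟫_ℝ) / ‖P - Q‖ ^ 2)| ≤ ‖τ • P + (1 - τ) • Q‖ := by
  set d := ‖P - Q‖ with hd
  have hd0 : 0 < d := by
    rw [hd, norm_pos_iff]; exact sub_ne_zero_of_ne hPQ
  set τ₀ := -(⟪Q, P - Q⟫_ℝ) / d ^ 2 with hτ₀
  set X := τ • P + (1 - τ) • Q with hX
  have hinner : ⟪X, P - Q⟫_ℝ = d ^ 2 * (τ - τ₀) := by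
    have eP : ⟪P, P - Q⟫_ℝ = ⟪P - Q, P - Q⟫_ℝ + ⟪Q, P - Q⟫_ℝ := by
      rw [inner_sub_left]; ring
    have ePP : ⟪P - Q, P - Q⟫_ℝ = d ^ 2 := by rw [real_inner_self_eq_norm_sq]
    rw [hX, inner_add_left, real_inner_smul_left, real_inner_smul_left, eP, ePP, hτ₀]
    field_simp
    ring
  have hCS : |⟪X, P - Q⟫_ℝ| ≤ ‖X‖ * d := by
    rw [hd]; exact abs_real_inner_le_norm X (P - Q)
  rw [hinner, abs_mul, abs_of_nonneg (by positivity : (0:ℝ) ≤ d ^ 2)] at hCS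
  nlinarith [abs_nonneg (τ - τ₀), norm_nonneg X]

end Aux

set_option maxHeartbeats 1000000 in
/-- For an N-function `φ` with index condition `p ≤ s·φ''(s)/φ'(s)+1 ≤ q` (`1 < p ≤ q`),
`φ'(1+|P|+|Q|)/(1+|P|+|Q|) ∼ ∫₀¹ φ'(1+|τP+(1−τ)Q|)/(1+|τP+(1−τ)Q|) dτ`
uniformly in `P, Q ∈ ℝ^{N×n}`, with constants depending only on `p, q`. -/
theorem segment_integral_equivalence (N n : ℕ) (p q : ℝ) (φ φ' φ'' : ℝ → ℝ)
    (hp : 1 < p) (hpq : p ≤ q) (h : IsNFun φ φ' φ'' p q) :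
    ∃ c : ℝ, 1 ≤ c ∧ ∀ P Q : EuclideanSpace ℝ (Fin N × Fin n),
      c⁻¹ * (∫ τ in (0:ℝ)..1,
          φ' (1 + ‖τ • P + (1 - τ) • Q‖) / (1 + ‖τ • P + (1 - τ) • Q‖)) ≤
        φ' (1 + ‖P‖ + ‖Q‖) / (1 + ‖P‖ + ‖Q‖) ∧
      φ' (1 + ‖P‖ + ‖Q‖) / (1 + ‖P‖ + ‖Q‖) ≤
        c * ∫ τ in (0:ℝ)..1,
          φ' (1 + ‖τ • P + (1 - τ) • Q‖) / (1 + ‖τ • P + (1 - τ) • Q‖) := by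
  have hq1 : 1 < q := lt_of_lt_of_le hp hpq
  set α := max (2 - p) 0 with hαdef
  have hα0 : 0 ≤ α := le_max_right _ _
  have hα1 : α < 1 := max_lt (by linarith) one_pos
  have h1α : (0:ℝ) < 1 - α := by linarith
  have hc4 : (0:ℝ) < 4 ^ (q-1) := Real.rpow_pos_of_pos (by norm_num) _
  have hcR : (0:ℝ) < 10 / (1 - α) := div_pos (by norm_num) h1α
  have hcR10 : (10:ℝ) ≤ 10 / (1 - α) := by
    rw [le_div_iff₀ h1α]; nlinarith
  set c := 4 * 4 ^ (q - 1) + 10 / (1 - α) + 1 with hcdef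
  have hcpos : (0:ℝ) < c := by
    rw [hcdef]; nlinarith
  have hc1 : (1:ℝ) ≤ c := by
    rw [hcdef]; nlinarith
  refine ⟨c, hc1, ?_⟩
  intro P Q
  set m := ‖P‖ + ‖Q‖ with hm
  have hm0 : (0:ℝ) ≤ m := by rw [hm]; positivity
  have hGrw : (1:ℝ) + ‖P‖ + ‖Q‖ = 1 + m := by rw [hm]; ring
  rw [hGrw]
  set G := φ' (1 + m) / (1 + m) with hG
  have hGnn : 0 ≤ G := by
    rw [hG]
    exact div_nonneg (h.deriv_nonneg' (by linarith)) (by linarith)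
  set F : ℝ → ℝ := fun τ => φ' (1 + ‖τ • P + (1 - τ) • Q‖) / (1 + ‖τ • P + (1 - τ) • Q‖)
    with hF
  have hXle : ∀ τ ∈ Icc (0:ℝ) 1, ‖τ • P + (1 - τ) • Q‖ ≤ m := fun τ hτ =>
    seg_norm_le P Q hτ.1 hτ.2
  have hXnn : ∀ τ : ℝ, (0:ℝ) ≤ ‖τ • P + (1 - τ) • Q‖ := fun τ => norm_nonneg _
  have hvpos : ∀ τ : ℝ, (0:ℝ) < 1 + ‖τ • P + (1 - τ) • Q‖ := fun τ => by
    have := hXnn τ; linarith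
  have hFcont : Continuous F := by
    have hv : Continuous (fun τ : ℝ => 1 + ‖τ • P + (1 - τ) • Q‖) := by
      apply continuous_const.add
      apply Continuous.norm
      exact (continuous_id.smul continuous_const).add
        ((continuous_const.sub continuous_id).smul continuous_const)
    rw [continuous_iff_continuousAt]
    intro τ
    have h1 : ContinuousAt (φ' ∘ fun τ : ℝ => 1 + ‖τ • P + (1 - τ) • Q‖) τ :=
      ContinuousAt.comp (h.derivCont.continuousAt (Ici_mem_nhds (hvpos τ))) hv.continuousAt
    exact ContinuousAt.div h1 hv.continuousAt (ne_of_gt (hvpos τ))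
  have hFint : IntervalIntegrable F volume 0 1 := hFcont.intervalIntegrable 0 1
  have hF0 : ∀ τ : ℝ, 0 ≤ F τ := fun τ => by
    rw [hF]
    exact div_nonneg (h.deriv_nonneg' (hvpos τ).le) (hvpos τ).le
  have hInn : 0 ≤ ∫ τ in (0:ℝ)..1, F τ :=
    intervalIntegral.integral_nonneg zero_le_one (fun τ _ => hF0 τ)
  -- Upper bound : G ≤ 4 * 4^(q-1) * ∫ F
  have claim1 : G ≤ 4 * 4 ^ (q-1) * ∫ τ in (0:ℝ)..1, F τ := by
    have key : ∃ u : ℝ, 0 ≤ u ∧ u + 4⁻¹ ≤ 1 ∧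
        ∀ τ ∈ Icc u (u + 4⁻¹), m / 4 ≤ ‖τ • P + (1 - τ) • Q‖ := by
      rcases le_total ‖Q‖ ‖P‖ with hQP | hPQ
      · refine ⟨3/4, by norm_num, by norm_num, fun τ hτ => ?_⟩
        have h1 : 3/4 ≤ τ := hτ.1
        have h2 : τ ≤ 1 := by have := hτ.2; norm_num at this ⊢; linarith
        exact seg_good_right P Q hQP h1 h2
      · refine ⟨0, le_refl _, by norm_num, fun τ hτ => ?_⟩
        have h1 : 0 ≤ τ := hτ.1
        have h2 : τ ≤ 1/4 := by have := hτ.2; norm_num at this ⊢; linarith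
        exact seg_good_left P Q hPQ h1 h2
    obtain ⟨u, hu0, hu1, hlow⟩ := key
    set K := G / 4 ^ (q-1) with hK
    have hKnn : 0 ≤ K := by rw [hK]; positivity
    have huu : u ≤ u + 4⁻¹ := by norm_num
    have hsub1 : uIcc (0:ℝ) u ⊆ uIcc 0 1 := by
      rw [uIcc_of_le (by linarith : (0:ℝ) ≤ u), uIcc_of_le zero_le_one]
      exact Icc_subset_Icc (le_refl _) (by linarith)
    have hsub2 : uIcc u (u + 4⁻¹) ⊆ uIcc (0:ℝ) 1 := by
      rw [uIcc_of_le huu, uIcc_of_le zero_le_one]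
      exact Icc_subset_Icc hu0 hu1
    have hsub3 : uIcc (u + 4⁻¹) 1 ⊆ uIcc (0:ℝ) 1 := by
      rw [uIcc_of_le hu1, uIcc_of_le zero_le_one]
      exact Icc_subset_Icc (by linarith) (le_refl _)
    have i1 : IntervalIntegrable F volume 0 u := hFint.mono_set hsub1
    have i2 : IntervalIntegrable F volume u (u + 4⁻¹) := hFint.mono_set hsub2
    have i3 : IntervalIntegrable F volume (u + 4⁻¹) 1 := hFint.mono_set hsub3
    have hsplit : (∫ τ in (0:ℝ)..1, F τ) =
        (∫ τ in (0:ℝ)..u, F τ) + (∫ τ in u..(u + 4⁻¹), F τ) + (∫ τ in (u + 4⁻¹)..1, F τ) := by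
      rw [intervalIntegral.integral_add_adjacent_intervals i1 i2,
        intervalIntegral.integral_add_adjacent_intervals (i1.trans i2) i3]
    have hmid : K / 4 ≤ ∫ τ in u..(u + 4⁻¹), F τ := by
      have hpoint : ∀ τ ∈ Icc u (u + 4⁻¹), K ≤ F τ := by
        intro τ hτ
        have hτ01 : τ ∈ Icc (0:ℝ) 1 := ⟨by linarith [hτ.1], by linarith [hτ.2]⟩
        have hlow' := hlow τ hτ
        have hup := h.g_upper hq1.le (hXnn τ) (hXle τ hτ01)
          (by linarith [hlow'] : 1 + m ≤ 4 * (1 + ‖τ • P + (1 - τ) • Q‖))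
        rw [hK, div_le_iff₀ hc4]
        show φ' (1 + m) / (1 + m) ≤ (φ' (1 + ‖τ • P + (1 - τ) • Q‖) /
          (1 + ‖τ • P + (1 - τ) • Q‖)) * 4 ^ (q-1)
        linarith [hup]
      have := intervalIntegral.integral_mono_on huu
        (intervalIntegrable_const) i2 hpoint
      rw [intervalIntegral.integral_const] at this
      have e : (u + 4⁻¹ - u) • K = K / 4 := by
        rw [smul_eq_mul]; ring
      rw [e] at this
      exact this
    have hpos1 : 0 ≤ ∫ τ in (0:ℝ)..u, F τ :=
      intervalIntegral.integral_nonneg hu0 (fun τ _ => hF0 τ)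
    have hpos3 : 0 ≤ ∫ τ in (u + 4⁻¹)..1, F τ :=
      intervalIntegral.integral_nonneg hu1 (fun τ _ => hF0 τ)
    have hIlow : K / 4 ≤ ∫ τ in (0:ℝ)..1, F τ := by
      rw [hsplit]; linarith
    have hGeq : G = 4 * 4 ^ (q-1) * (K / 4) := by
      rw [hK]; field_simp
    rw [hGeq]
    apply mul_le_mul_of_nonneg_left hIlow (by positivity)
  -- Lower bound : ∫ F ≤ 10/(1-α) * G
  have claim2 : (∫ τ in (0:ℝ)..1, F τ) ≤ 10 / (1 - α) * G := by
    set d := ‖P - Q‖ with hd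
    have hdm : d ≤ m := by rw [hd, hm]; exact norm_sub_le P Q
    have hd0 : 0 ≤ d := norm_nonneg _
    have hconst_int : IntervalIntegrable (fun _ : ℝ => 10 / (1 - α) * G) volume 0 1 :=
      intervalIntegrable_const
    rcases le_or_gt d (m/4) with hA | hB
    · -- d small : the whole segment stays at distance ≳ m
      have hpoint : ∀ τ ∈ Icc (0:ℝ) 1, F τ ≤ 10 / (1 - α) * G := by
        intro τ hτ
        have hlowA : m / 4 ≤ ‖τ • P + (1 - τ) • Q‖ := by
          have := seg_lower_A P Q hτ.1 hτ.2
          rw [← hm, ← hd] at this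
          linarith
        have hprod : (0:ℝ) ≤ (10 / (1 - α) - 4) * (1 + ‖τ • P + (1 - τ) • Q‖) :=
          mul_nonneg (by linarith) (by linarith [hXnn τ])
        have := h.g_lower' hp (hXnn τ) (hXle τ hτ) (by linarith : (1:ℝ) ≤ 10 / (1 - α))
          (by nlinarith [hXnn τ] : 1 + m ≤ 10 / (1 - α) * (1 + ‖τ • P + (1 - τ) • Q‖))
        exact this
      calc (∫ τ in (0:ℝ)..1, F τ) ≤ ∫ _ in (0:ℝ)..1, 10 / (1 - α) * G :=
            intervalIntegral.integral_mono_on zero_le_one hFint hconst_int hpoint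
        _ = 10 / (1 - α) * G := by rw [intervalIntegral.integral_const]; simp
    rcases le_or_gt m 4 with hm4 | hm4
    · -- m small
      have hpoint : ∀ τ ∈ Icc (0:ℝ) 1, F τ ≤ 10 / (1 - α) * G := by
        intro τ hτ
        have hprod : (0:ℝ) ≤ (10 / (1 - α) - 5) * (1 + ‖τ • P + (1 - τ) • Q‖) :=
          mul_nonneg (by linarith) (by linarith [hXnn τ])
        have := h.g_lower' hp (hXnn τ) (hXle τ hτ) (by linarith : (1:ℝ) ≤ 10 / (1 - α))
          (by nlinarith [hXnn τ] : 1 + m ≤ 10 / (1 - α) * (1 + ‖τ • P + (1 - τ) • Q‖))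
        exact this
      calc (∫ τ in (0:ℝ)..1, F τ) ≤ ∫ _ in (0:ℝ)..1, 10 / (1 - α) * G :=
            intervalIntegral.integral_mono_on zero_le_one hFint hconst_int hpoint
        _ = 10 / (1 - α) * G := by rw [intervalIntegral.integral_const]; simp
    · -- the singular case
      have hd1 : 1 < d := by linarith
      have hPQne : P ≠ Q := by
        intro hPQ
        rw [hd, hPQ, sub_self, norm_zero] at hd1
        linarith
      set τ₀ := -(inner ℝ Q (P - Q) : ℝ) / d ^ 2 with hτ₀
      have hproj : ∀ τ : ℝ, d * |τ - τ₀| ≤ ‖τ • P + (1 - τ) • Q‖ := fun τ =>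
        seg_proj P Q hPQne τ
      have hd5 : 1 + m ≤ 5 * d := by linarith
      clear_value τ₀
      clear hτ₀
      have hae : ∀ᵐ τ ∂(volume.restrict (Icc (0:ℝ) 1)),
          F τ ≤ (5 * G) * |τ - τ₀| ^ (-α) := by
        have hne : ∀ᵐ τ : ℝ ∂volume, τ ≠ τ₀ := by
          rw [ae_iff]
          have e : {τ : ℝ | ¬ τ ≠ τ₀} = {τ₀} := by ext x; simp
          rw [e]
          exact measure_singleton _
        filter_upwards [ae_restrict_mem measurableSet_Icc, ae_restrict_of_ae hne]
          with τ hτm hτne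
        have habs : 0 < |τ - τ₀| := abs_pos.mpr (sub_ne_zero_of_ne hτne)
        have step1 := h.g_lower (t := ‖τ • P + (1 - τ) • Q‖) (s := m) (hXnn τ) (hXle τ hτm)
        rw [← hαdef] at step1
        have step2 : (1 + m) / (1 + ‖τ • P + (1 - τ) • Q‖) ≤ 5 / |τ - τ₀| := by
          rw [div_le_div_iff₀ (hvpos τ) habs]
          nlinarith [hproj τ, abs_nonneg (τ - τ₀), hXnn τ]
        have step3 : ((1 + m) / (1 + ‖τ • P + (1 - τ) • Q‖)) ^ α ≤ (5 / |τ - τ₀|) ^ α :=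
          Real.rpow_le_rpow (by positivity) step2 hα0
        have step4 : (5 / |τ - τ₀|) ^ α = 5 ^ α * |τ - τ₀| ^ (-α) := by
          rw [Real.div_rpow (by norm_num) (abs_nonneg _), Real.rpow_neg (abs_nonneg _),
            div_eq_mul_inv]
        have step5 : (5:ℝ) ^ α ≤ 5 := by
          calc (5:ℝ) ^ α ≤ 5 ^ (1:ℝ) :=
                Real.rpow_le_rpow_of_exponent_le (by norm_num) hα1.le
            _ = 5 := Real.rpow_one 5
        have hrnn : 0 ≤ |τ - τ₀| ^ (-α) := Real.rpow_nonneg (abs_nonneg _) _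
        calc F τ ≤ ((1 + m) / (1 + ‖τ • P + (1 - τ) • Q‖)) ^ α * G := step1
          _ ≤ (5 ^ α * |τ - τ₀| ^ (-α)) * G := by
              rw [← step4]
              exact mul_le_mul_of_nonneg_right step3 hGnn
          _ ≤ (5 * |τ - τ₀| ^ (-α)) * G := by
              apply mul_le_mul_of_nonneg_right _ hGnn
              exact mul_le_mul_of_nonneg_right step5 hrnn
          _ = (5 * G) * |τ - τ₀| ^ (-α) := by ring
      have hH : IntervalIntegrable (fun τ => (5 * G) * |τ - τ₀| ^ (-α)) volume 0 1 :=
        (intervalIntegrable_abs_rpow hα1 τ₀ 0 1).const_mul _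
      calc (∫ τ in (0:ℝ)..1, F τ)
          ≤ ∫ τ in (0:ℝ)..1, (5 * G) * |τ - τ₀| ^ (-α) :=
            intervalIntegral.integral_mono_ae_restrict zero_le_one hFint hH hae
        _ = (5 * G) * ∫ τ in (0:ℝ)..1, |τ - τ₀| ^ (-α) := by
            rw [intervalIntegral.integral_const_mul]
        _ ≤ (5 * G) * (2 / (1 - α)) := by
            apply mul_le_mul_of_nonneg_left (integral_abs_rpow_le hα1 hα0 τ₀)
            positivity
        _ = 10 / (1 - α) * G := by ring
  constructor
  · rw [inv_mul_le_iff₀ hcpos]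
    calc (∫ τ in (0:ℝ)..1, F τ) ≤ 10 / (1 - α) * G := claim2
      _ ≤ c * G := by
          apply mul_le_mul_of_nonneg_right _ hGnn
          rw [hcdef]; nlinarith
  · calc G ≤ 4 * 4 ^ (q-1) * ∫ τ in (0:ℝ)..1, F τ := claim1
      _ ≤ c * ∫ τ in (0:ℝ)..1, F τ := by
          apply mul_le_mul_of_nonneg_right _ hInn
          rw [hcdef]; nlinarith
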